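/- Let 𝓡 be a weakly reversible reaction network on d species and suppose R = (y*_1 → y*_2, …, y*_M → y*_1) is a strong tier-1 cycle along a tier sequence {x_n} satisfying: (1) x_n − x_0 ∈ span_ℝ{y' − y : y → y' ∈ 𝓡} for every n, and (2) y*_{m_1} < y*_{m_2} componentwise for some m_1, m_2 ∈ {1,…,M}. Let x ∈ ℤ^d_{≥0} satisfy x ≥ y*_1 and (x)_i = c_i for every i ∉ I_{x_n}, where c_i denotes the constant value of (x_n)_i for i ∉ I_{x_n}. Then there exists a tier sequence {x̄_n} ⊆ ℤ^d_{≥0} such that: every x̄_n is reachable from x; R is a strong tier-1 cycle along {x̄_n}; (x̄_n)_i = c_i for every n and every i ∉ I_{x_n}; and there is a subsequence {x_{n_k}} of {x_n} with sup_k ‖x̄_k − x_{n_k}‖_∞ < ∞. -/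

import Mathlib

open Filter Finset

/-- A reaction network on `d` species: every reaction has a nonnegative source complex and
a nonnegative product complex, and the source differs from the product. -/
def IsRN (d : ℕ) (Rn : Finset ((Fin d → ℤ) × (Fin d → ℤ))) : Prop :=
  ∀ r ∈ Rn, (∀ i, 0 ≤ r.1 i) ∧ (∀ i, 0 ≤ r.2 i) ∧ r.1 ≠ r.2

/-- Mass-action intensity `λ_y(x) = ∏ i, x_i!/(x_i - y_i)!` if `x ≥ y` componentwise, else `0`. -/
def intensity (d : ℕ) (y x : Fin d → ℤ) : ℕ :=
  if ∀ i, y i ≤ x i then ∏ i : Fin d, Nat.descFactorial (x i).toNat ((y i).toNat) else 0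

/-- Cyclic successor on `{1, …, M}`: `cyc M m = m + 1` for `m < M` and `cyc M M = 1`. -/
def cyc (M m : ℕ) : ℕ := if m = M then 1 else m + 1

/-- `xshift d ystar x m n = x^m_n = x_n + ∑_{j=1}^{m-1} (y*_{j+1} - y*_j)`. -/
def xshift (d : ℕ) (ystar : ℕ → Fin d → ℤ) (x : ℕ → Fin d → ℤ) (m n : ℕ) : Fin d → ℤ :=
  fun i => x n i + ∑ j ∈ Finset.Ico 1 m, (ystar (j + 1) i - ystar j i)

/-- The ordered list `(y*_1 → y*_2, …, y*_M → y*_1)` consists of reactions of the network. -/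
def IsCycleIn (d : ℕ) (Rn : Finset ((Fin d → ℤ) × (Fin d → ℤ))) (M : ℕ)
    (ystar : ℕ → Fin d → ℤ) : Prop :=
  ∀ m, 1 ≤ m → m ≤ M → (ystar m, ystar (cyc M m)) ∈ Rn

/-- Condition (ii) of a strong tier-1 cycle, with explicit witness `m0`. -/
def TierLimits (d : ℕ) (Rn : Finset ((Fin d → ℤ) × (Fin d → ℤ))) (M : ℕ)
    (ystar : ℕ → Fin d → ℤ) (x : ℕ → Fin d → ℤ) (m0 : ℕ) : Prop :=
  ∀ m, 1 ≤ m → m ≤ M → ∀ y y' : Fin d → ℤ, (y, y') ∈ Rn →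
    (y, y') ≠ (ystar m, ystar (cyc M m)) →
    Tendsto (fun n =>
        ((intensity d (ystar m0) (xshift d ystar x m0 n) : ℝ) *
          (intensity d y (xshift d ystar x m n) : ℝ)) /
          (intensity d (ystar m) (xshift d ystar x m n) : ℝ))
      atTop (nhds 0)

/-- `R = (y*_1 → y*_2, …, y*_M → y*_1)` is a strong tier-1 cycle along `x`. -/
def IsStrongT1Cycle (d : ℕ) (Rn : Finset ((Fin d → ℤ) × (Fin d → ℤ))) (M : ℕ)
    (ystar : ℕ → Fin d → ℤ) (x : ℕ → Fin d → ℤ) : Prop :=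
  IsCycleIn d Rn M ystar ∧
  (∀ n, 0 < intensity d (ystar 1) (x n)) ∧
  ∃ m0, 1 ≤ m0 ∧ m0 ≤ M ∧ TierLimits d Rn M ystar x m0

/-- `y` is a source complex of the network. -/
def IsSourceIn (d : ℕ) (Rn : Finset ((Fin d → ℤ) × (Fin d → ℤ))) (y : Fin d → ℤ) : Prop :=
  ∃ y', (y, y') ∈ Rn

/-- `y` is a complex (source or product) of the network. -/
def ComplexOf (d : ℕ) (Rn : Finset ((Fin d → ℤ) × (Fin d → ℤ))) (y : Fin d → ℤ) : Prop :=
  ∃ r ∈ Rn, r.1 = y ∨ r.2 = y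

/-- Tier sequence of a reaction network. -/
def IsTierSeq (d : ℕ) (Rn : Finset ((Fin d → ℤ) × (Fin d → ℤ)))
    (x : ℕ → Fin d → ℤ) : Prop :=
  (∀ n i, 0 ≤ x n i) ∧
  (∃ i, Tendsto (fun n => x n i) atTop atTop) ∧
  (∀ i, (Tendsto (fun n => x n i) atTop atTop ∧ Monotone fun n => x n i) ∨
      (∃ c : ℤ, ∀ n, x n i = c)) ∧
  (∀ y y' : Fin d → ℤ, IsSourceIn d Rn y → IsSourceIn d Rn y' →
    (Tendsto (fun n => (intensity d y (x n) : ℝ) / (intensity d y' (x n) : ℝ)) atTop atTop ∨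
      ∃ c : ℝ, Tendsto (fun n => (intensity d y (x n) : ℝ) / (intensity d y' (x n) : ℝ))
        atTop (nhds c)))

/-- One reaction step: some reaction `y → y'` with `y ≤ a` fires, giving `b = a + y' - y`. -/
def ReactStep (d : ℕ) (Rn : Finset ((Fin d → ℤ) × (Fin d → ℤ)))
    (a b : Fin d → ℤ) : Prop :=
  ∃ r ∈ Rn, (∀ i, r.1 i ≤ a i) ∧ b = fun i => a i + (r.2 i - r.1 i)

/-- `w` is reachable from `z` by finitely many reaction steps. -/
def Reachable (d : ℕ) (Rn : Finset ((Fin d → ℤ) × (Fin d → ℤ)))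
    (z w : Fin d → ℤ) : Prop :=
  Relation.ReflTransGen (ReactStep d Rn) z w

/-- Weak reversibility: every reaction lies on a directed cycle of reactions. -/
def WeaklyReversible (d : ℕ) (Rn : Finset ((Fin d → ℤ) × (Fin d → ℤ))) : Prop :=
  ∀ r ∈ Rn, ∃ (K : ℕ) (ys : ℕ → Fin d → ℤ), 2 ≤ K ∧
    ys 1 = r.1 ∧ ys 2 = r.2 ∧
    (∀ j, 1 ≤ j → j < K → (ys j, ys (j + 1)) ∈ Rn) ∧
    (ys K, ys 1) ∈ Rn


private lemma descFactorial_pos' {k n : ℕ} (h : k ≤ n) : 0 < n.descFactorial k :=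
  Nat.pos_of_ne_zero fun h0 => absurd (Nat.descFactorial_eq_zero_iff_lt.mp h0) (not_lt.mpr h)

private lemma descFactorial_cast_real {q : ℕ} : ∀ {m : ℤ}, (q : ℤ) ≤ m →
    ((m.toNat.descFactorial q : ℕ) : ℝ) = ∏ j ∈ Finset.range q, ((m : ℝ) - (j : ℝ)) := by
  induction q with
  | zero => intro m _; simp
  | succ q ih =>
    intro m h
    have hq : (q : ℤ) ≤ m := by push_cast at h ⊢; omega
    have hm0 : (0 : ℤ) ≤ m := le_trans (Int.natCast_nonneg q) hq
    have h1 : q ≤ m.toNat := by omega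
    have h2 : ((m.toNat : ℕ) : ℝ) = (m : ℝ) := by
      exact_mod_cast congrArg (Int.cast : ℤ → ℝ) (Int.toNat_of_nonneg hm0)
    rw [Nat.descFactorial_succ, Finset.prod_range_succ, Nat.cast_mul, ih hq,
      Nat.cast_sub h1, h2]
    ring

private lemma tendsto_descFactorial_ratio {a : ℕ → ℤ} (ha : Tendsto a atTop atTop)
    (t : ℤ) (q : ℕ) :
    Tendsto (fun n => (((a n + t).toNat.descFactorial q : ℕ) : ℝ) /
      (((a n).toNat.descFactorial q : ℕ) : ℝ)) atTop (nhds 1) := by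
  have hax : Tendsto (fun n => ((a n : ℝ))) atTop atTop :=
    tendsto_intCast_atTop_atTop.comp ha
  have key : Tendsto (fun n => ∏ j ∈ Finset.range q,
      ((((a n : ℝ)) + (t : ℝ) - (j : ℝ)) / (((a n : ℝ)) - (j : ℝ)))) atTop (nhds 1) := by
    have h1 : (1 : ℝ) = ∏ _j ∈ Finset.range q, (1 : ℝ) := by simp
    rw [h1]
    apply tendsto_finset_prod
    intro j _
    have h2 : Tendsto (fun n => ((a n : ℝ) - (j : ℝ))) atTop atTop :=
      tendsto_atTop_add_const_right _ _ hax
    have h3 : Tendsto (fun n => ((t : ℝ)) / ((a n : ℝ) - (j : ℝ))) atTop (nhds 0) :=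
      tendsto_const_nhds.div_atTop h2
    have h4 : Tendsto (fun n => 1 + (t : ℝ) / ((a n : ℝ) - (j : ℝ))) atTop (nhds 1) := by
      simpa using tendsto_const_nhds.add h3
    apply h4.congr'
    filter_upwards [h2.eventually_gt_atTop 0] with n hn
    have hne : (a n : ℝ) - (j : ℝ) ≠ 0 := ne_of_gt hn
    field_simp
    ring
  apply key.congr'
  filter_upwards [ha.eventually_ge_atTop (q : ℤ), ha.eventually_ge_atTop ((q : ℤ) - t)]
    with n h1 h2
  rw [descFactorial_cast_real (by omega : (q : ℤ) ≤ a n + t), descFactorial_cast_real h1,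
    ← Finset.prod_div_distrib]
  apply Finset.prod_congr rfl
  intro j _
  push_cast
  ring

private lemma intensity_pos' {d : ℕ} {y x : Fin d → ℤ} (h : ∀ i, y i ≤ x i) :
    0 < intensity d y x := by
  rw [intensity, if_pos h]
  exact Finset.prod_pos fun i _ => descFactorial_pos' (Int.toNat_le_toNat (h i))

private lemma le_of_intensity_pos' {d : ℕ} {y x : Fin d → ℤ} (h : 0 < intensity d y x) :
    ∀ i, y i ≤ x i := by
  by_contra hc
  rw [intensity, if_neg hc] at h
  exact lt_irrefl 0 h

private lemma const_not_tendsto {c : ℤ} {x : ℕ → ℤ} (h : ∀ n, x n = c) :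
    ¬ Filter.Tendsto x Filter.atTop Filter.atTop := by
  intro hT
  obtain ⟨n, hn⟩ := (hT.eventually_ge_atTop (c + 1)).exists
  rw [h n] at hn
  omega

private lemma intensity_shift {d : ℕ} (y v : Fin d → ℤ) (z : ℕ → Fin d → ℤ)
    (hz : ∀ i, Filter.Tendsto (fun n => z n i) Filter.atTop Filter.atTop ∨
      ((∀ n, z n i = z 0 i) ∧ v i = 0)) :
    ∃ ρ : ℕ → ℝ, Filter.Tendsto ρ Filter.atTop (nhds 1) ∧
      ∀ᶠ n in Filter.atTop,
        (intensity d y (fun i => z n i + v i) : ℝ) = ρ n * (intensity d y (z n) : ℝ) := by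
  classical
  by_cases hblock : ∃ i, (∀ n, z n i = z 0 i) ∧ v i = 0 ∧ z 0 i < y i
  · obtain ⟨i0, hc, hv, hlt⟩ := hblock
    refine ⟨fun _ => 1, tendsto_const_nhds, ?_⟩
    filter_upwards with n
    have h1 : ¬ (∀ i, y i ≤ z n i) := fun h => by have := h i0; rw [hc n] at this; omega
    have h2 : ¬ (∀ i, y i ≤ z n i + v i) := fun h => by
      have := h i0; rw [hc n, hv] at this; omega
    rw [intensity, intensity, if_neg h2, if_neg h1]
    simp
  · push_neg at hblock
    set ρ : ℕ → ℝ := fun n => ∏ i : Fin d,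
      ((((z n i + v i).toNat.descFactorial (y i).toNat : ℕ) : ℝ) /
        (((z n i).toNat.descFactorial (y i).toNat : ℕ) : ℝ)) with hρ
    have hev : ∀ i : Fin d, ∀ᶠ n in Filter.atTop, y i ≤ z n i ∧ y i ≤ z n i + v i := by
      intro i
      rcases hz i with hdiv | ⟨hconst, hv⟩
      · filter_upwards [hdiv.eventually_ge_atTop (y i), hdiv.eventually_ge_atTop (y i - v i)]
          with n h1 h2
        omega
      · have hyz : y i ≤ z 0 i := hblock i hconst hv
        filter_upwards with n
        rw [hconst n, hv]
        omega
    have hone : Filter.Tendsto ρ Filter.atTop (nhds 1) := by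
      rw [show (1 : ℝ) = ∏ _i : Fin d, (1 : ℝ) by simp]
      apply tendsto_finset_prod
      intro i _
      rcases hz i with hdiv | ⟨hconst, hv⟩
      · exact tendsto_descFactorial_ratio hdiv (v i) _
      · have hyz : y i ≤ z 0 i := hblock i hconst hv
        have heq : ∀ n, (((z n i + v i).toNat.descFactorial (y i).toNat : ℕ) : ℝ) /
            (((z n i).toNat.descFactorial (y i).toNat : ℕ) : ℝ) = 1 := by
          intro n
          rw [hconst n, hv, add_zero, div_self]
          exact_mod_cast (descFactorial_pos' (Int.toNat_le_toNat hyz)).ne'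
        simp only [heq]
        exact tendsto_const_nhds
    refine ⟨ρ, hone, ?_⟩
    filter_upwards [Filter.eventually_all.mpr hev] with n hn
    have h1 : ∀ i, y i ≤ z n i := fun i => (hn i).1
    have h2 : ∀ i, y i ≤ z n i + v i := fun i => (hn i).2
    rw [intensity, intensity, if_pos h2, if_pos h1]
    push_cast
    rw [hρ, ← Finset.prod_mul_distrib]
    apply Finset.prod_congr rfl
    intro i _
    rw [div_mul_cancel₀]
    exact_mod_cast (descFactorial_pos' (Int.toNat_le_toNat (h1 i))).ne'

private lemma div_transfer (ρ1 ρ2 ρ3 a b c : ℝ) (h3 : ρ3 ≠ 0) :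
    (ρ1 * a * (ρ2 * b)) / (ρ3 * c) = (ρ1 * ρ2 / ρ3) * (a * b / c) := by
  rcases eq_or_ne c 0 with rfl | hc
  · simp
  · field_simp

private lemma div_transfer2 (ρ1 ρ2 a b : ℝ) (h2 : ρ2 ≠ 0) :
    (ρ1 * a) / (ρ2 * b) = (ρ1 / ρ2) * (a / b) := by
  rcases eq_or_ne b 0 with rfl | hb
  · simp
  · field_simp

section ReachAux

variable {d : ℕ} {Rn : Finset ((Fin d → ℤ) × (Fin d → ℤ))}

private lemma reach_step {a : Fin d → ℤ} {r : (Fin d → ℤ) × (Fin d → ℤ)} (hr : r ∈ Rn)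
    (h : ∀ i, r.1 i ≤ a i) : ReactStep d Rn a (a + (r.2 - r.1)) :=
  ⟨r, hr, h, by funext i; simp⟩

private lemma cyc_bounds {M m : ℕ} (hM : 1 ≤ M) (h1 : 1 ≤ m) (h2 : m ≤ M) :
    1 ≤ cyc M m ∧ cyc M m ≤ M := by
  unfold cyc; split <;> omega

variable {M : ℕ} {ystar : ℕ → Fin d → ℤ}

private lemma walk_iterate (hM : 1 ≤ M) (hcyc : IsCycleIn d Rn M ystar) (k : ℕ) :
    ∀ p, 1 ≤ p → p ≤ M →
      (1 ≤ (cyc M)^[k] p ∧ (cyc M)^[k] p ≤ M) ∧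
      ∀ b : Fin d → ℤ, (∀ i, ystar p i ≤ b i) →
        Reachable d Rn b (b + (ystar ((cyc M)^[k] p) - ystar p)) := by
  induction k with
  | zero =>
    intro p h1 h2
    refine ⟨⟨h1, h2⟩, fun b hb => ?_⟩
    rw [Function.iterate_zero_apply, sub_self, add_zero]
    exact Relation.ReflTransGen.refl
  | succ k ih =>
    intro p h1 h2
    obtain ⟨⟨hk1, hk2⟩, hreach⟩ := ih p h1 h2
    have hstep_mem := hcyc _ hk1 hk2
    have hcycb := cyc_bounds hM hk1 hk2
    rw [Function.iterate_succ_apply']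
    refine ⟨hcycb, fun b hb => ?_⟩
    have h3 : ∀ i, ystar ((cyc M)^[k] p) i ≤ (b + (ystar ((cyc M)^[k] p) - ystar p)) i := by
      intro i
      have := hb i
      simp only [Pi.add_apply, Pi.sub_apply]
      omega
    have hstep := reach_step hstep_mem h3
    have heq : b + (ystar ((cyc M)^[k] p) - ystar p) +
        (ystar (cyc M ((cyc M)^[k] p)) - ystar ((cyc M)^[k] p)) =
        b + (ystar (cyc M ((cyc M)^[k] p)) - ystar p) := by abel
    exact (hreach b hb).trans (Relation.ReflTransGen.single (heq ▸ hstep))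

private lemma cyc_iterate_linear (M : ℕ) :
    ∀ j p, 1 ≤ p → p + j ≤ M → (cyc M)^[j] p = p + j := by
  intro j
  induction j with
  | zero => intro p _ _; simp
  | succ j ih =>
    intro p h1 h2
    rw [Function.iterate_succ_apply', ih p h1 (by omega)]
    unfold cyc
    rw [if_neg (by omega)]
    omega

private lemma cyc_reaches {M p q : ℕ} (hp1 : 1 ≤ p) (hp2 : p ≤ M)
    (hq1 : 1 ≤ q) (hq2 : q ≤ M) : ∃ k, (cyc M)^[k] p = q := by
  rcases le_or_gt p q with h | h
  · exact ⟨q - p, by rw [cyc_iterate_linear M (q - p) p hp1 (by omega)]; omega⟩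
  · refine ⟨(q - 1) + (1 + (M - p)), ?_⟩
    rw [Function.iterate_add_apply, Function.iterate_add_apply,
      cyc_iterate_linear M (M - p) p hp1 (by omega),
      show p + (M - p) = M by omega, Function.iterate_one,
      show cyc M M = 1 by unfold cyc; rw [if_pos rfl],
      cyc_iterate_linear M (q - 1) 1 le_rfl (by omega)]
    omega

private lemma walk (hM : 1 ≤ M) (hcyc : IsCycleIn d Rn M ystar) {p q : ℕ}
    (hp1 : 1 ≤ p) (hp2 : p ≤ M) (hq1 : 1 ≤ q) (hq2 : q ≤ M)
    {b : Fin d → ℤ} (hb : ∀ i, ystar p i ≤ b i) :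
    Reachable d Rn b (b + (ystar q - ystar p)) := by
  obtain ⟨k, hk⟩ := cyc_reaches hp1 hp2 hq1 hq2
  have h := (walk_iterate hM hcyc k p hp1 hp2).2 b hb
  rwa [hk] at h

private lemma reach_rev (hwr : WeaklyReversible d Rn)
    {r : (Fin d → ℤ) × (Fin d → ℤ)} (hr : r ∈ Rn) {b : Fin d → ℤ}
    (hb : ∀ i, r.2 i ≤ b i) : Reachable d Rn b (b + (r.1 - r.2)) := by
  obtain ⟨K, ys, hK, h1, h2, hmid, hlast⟩ := hwr r hr
  have hb2 : ∀ i, ys 2 i ≤ b i := fun i => by rw [h2]; exact hb i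
  have main : ∀ j, 2 ≤ j → j ≤ K → Reachable d Rn b (b + (ys j - ys 2)) := by
    intro j hj
    induction j, hj using Nat.le_induction with
    | base =>
      intro _
      rw [sub_self, add_zero]
      exact Relation.ReflTransGen.refl
    | succ j hj ih =>
      intro hjK
      have hreach := ih (by omega)
      have hstep_mem := hmid j (by omega) (by omega)
      have h3 : ∀ i, ys j i ≤ (b + (ys j - ys 2)) i := by
        intro i
        have := hb2 i
        simp only [Pi.add_apply, Pi.sub_apply]
        omega
      have hstep := reach_step hstep_mem h3
      have heq : b + (ys j - ys 2) + (ys (j + 1) - ys j) = b + (ys (j + 1) - ys 2) := by abel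
      exact hreach.trans (Relation.ReflTransGen.single (heq ▸ hstep))
  have hK2 := main K hK le_rfl
  have h3 : ∀ i, ys K i ≤ (b + (ys K - ys 2)) i := by
    intro i
    have := hb2 i
    simp only [Pi.add_apply, Pi.sub_apply]
    omega
  have hstep := reach_step hlast h3
  have heq : b + (ys K - ys 2) + (ys 1 - ys K) = b + (r.1 - r.2) := by
    rw [h1, h2]; abel
  exact hK2.trans (Relation.ReflTransGen.single (heq ▸ hstep))

private lemma reach_move (hRn : IsRN d Rn) (hwr : WeaklyReversible d Rn)
    {s : Fin d → ℤ}
    (hs : s ∈ AddSubgroup.closure {w : Fin d → ℤ | ∃ r ∈ Rn, w = r.2 - r.1}) :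
    ∃ T : ℤ, ∀ b : Fin d → ℤ, (∀ i, T ≤ b i) →
      Reachable d Rn b (b + s) ∧ Reachable d Rn b (b - s) := by
  induction hs using AddSubgroup.closure_induction with
  | mem w hw =>
    obtain ⟨r, hr, rfl⟩ := hw
    refine ⟨∑ i, (r.1 i + r.2 i), fun b hb => ?_⟩
    have hnn : ∀ j ∈ Finset.univ, (0 : ℤ) ≤ r.1 j + r.2 j := fun j _ => by
      have h1 := (hRn r hr).1 j
      have h2 := (hRn r hr).2.1 j
      omega
    have hkey : ∀ i : Fin d, r.1 i + r.2 i ≤ ∑ j, (r.1 j + r.2 j) := fun i =>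
      Finset.single_le_sum hnn (Finset.mem_univ i)
    have h1 : ∀ i, r.1 i ≤ b i := fun i => by
      have := hkey i; have := hb i; have := (hRn r hr).2.1 i; omega
    have h2 : ∀ i, r.2 i ≤ b i := fun i => by
      have := hkey i; have := hb i; have := (hRn r hr).1 i; omega
    refine ⟨Relation.ReflTransGen.single (reach_step hr h1), ?_⟩
    have := reach_rev hwr hr h2
    rwa [show b + (r.1 - r.2) = b - (r.2 - r.1) by abel] at this
  | zero =>
    refine ⟨0, fun b _ => ⟨?_, ?_⟩⟩
    · rw [add_zero]
      exact Relation.ReflTransGen.refl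
    · rw [sub_zero]
      exact Relation.ReflTransGen.refl
  | add s1 s2 _ _ ih1 ih2 =>
    obtain ⟨T1, h1⟩ := ih1
    obtain ⟨T2, h2⟩ := ih2
    refine ⟨max T1 (T2 + ∑ i, |s1 i|), fun b hb => ?_⟩
    have hb1 : ∀ i, T1 ≤ b i := fun i => le_trans (le_max_left _ _) (hb i)
    have habs : ∀ i : Fin d, |s1 i| ≤ ∑ j, |s1 j| := fun i =>
      Finset.single_le_sum (fun j _ => abs_nonneg (s1 j)) (Finset.mem_univ i)
    have hb2p : ∀ i, T2 ≤ (b + s1) i := fun i => by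
      have := hb i; have := habs i
      simp only [Pi.add_apply]
      have := le_max_right T1 (T2 + ∑ j, |s1 j|)
      have h5 := neg_abs_le (s1 i)
      have h6 := le_abs_self (s1 i)
      omega
    have hb2m : ∀ i, T2 ≤ (b - s1) i := fun i => by
      have := hb i; have := habs i
      simp only [Pi.sub_apply]
      have := le_max_right T1 (T2 + ∑ j, |s1 j|)
      have h6 := le_abs_self (s1 i)
      omega
    constructor
    · have ha := (h1 b hb1).1
      have hc := (h2 (b + s1) hb2p).1
      rw [show b + s1 + s2 = b + (s1 + s2) by abel] at hc
      exact ha.trans hc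
    · have ha := (h1 b hb1).2
      have hc := (h2 (b - s1) hb2m).2
      rw [show b - s1 - s2 = b - (s1 + s2) by abel] at hc
      exact ha.trans hc
  | neg s1 _ ih =>
    obtain ⟨T, h⟩ := ih
    refine ⟨T, fun b hb => ?_⟩
    refine ⟨?_, ?_⟩
    · have := (h b hb).2
      rwa [show b - s1 = b + (-s1) by abel] at this
    · have := (h b hb).1
      rwa [show b + s1 = b - (-s1) by abel] at this

end ReachAux

section PumpAux

variable {d : ℕ} {Rn : Finset ((Fin d → ℤ) × (Fin d → ℤ))} {M : ℕ} {ystar : ℕ → Fin d → ℤ}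

private lemma reach_pump (hM : 1 ≤ M) (hcyc : IsCycleIn d Rn M ystar)
    {m1 m2 : ℕ} (hm11 : 1 ≤ m1) (hm12 : m1 ≤ M) (hm21 : 1 ≤ m2) (hm22 : m2 ≤ M)
    (hδ : ∀ i, ystar m1 i ≤ ystar m2 i) (U : ℕ) :
    ∀ b : Fin d → ℤ, (∀ i, ystar m1 i ≤ b i) →
      Reachable d Rn b (b + U • (ystar m2 - ystar m1)) := by
  induction U with
  | zero =>
    intro b _
    rw [zero_nsmul, add_zero]
    exact Relation.ReflTransGen.refl
  | succ U ih =>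
    intro b hb
    have hb' : ∀ i, ystar m1 i ≤ (b + U • (ystar m2 - ystar m1)) i := by
      intro i
      have h0 := hb i
      have h1 := hδ i
      have h2 : (0 : ℤ) ≤ (U : ℤ) * (ystar m2 i - ystar m1 i) :=
        mul_nonneg (Int.natCast_nonneg U) (by omega)
      simp only [Pi.add_apply, Pi.smul_apply, Pi.sub_apply, nsmul_eq_mul, Pi.mul_apply, Pi.natCast_apply]
      omega
    have hw := walk hM hcyc hm11 hm12 hm21 hm22 hb'
    have heq : b + U • (ystar m2 - ystar m1) + (ystar m2 - ystar m1)
        = b + (U + 1) • (ystar m2 - ystar m1) := by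
      rw [succ_nsmul]; abel
    exact (ih b hb).trans (heq ▸ hw)

private lemma reach_down (hM : 1 ≤ M) (hcyc : IsCycleIn d Rn M ystar)
    {m1 m2 : ℕ} (hm11 : 1 ≤ m1) (hm12 : m1 ≤ M) (hm21 : 1 ≤ m2) (hm22 : m2 ≤ M)
    (hδ : ∀ i, ystar m1 i ≤ ystar m2 i) (U : ℕ)
    {t : Fin d → ℤ} (ht : ∀ i, ystar 1 i ≤ t i) :
    Reachable d Rn (t + (ystar m1 - ystar 1) + U • (ystar m2 - ystar m1))
      (t + (ystar m1 - ystar 1)) := by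
  induction U with
  | zero =>
    rw [zero_nsmul, add_zero]
    exact Relation.ReflTransGen.refl
  | succ U ih =>
    have hb : ∀ i, ystar m2 i ≤
        (t + (ystar m1 - ystar 1) + (U + 1) • (ystar m2 - ystar m1)) i := by
      intro i
      have h0 := ht i
      have h1 := hδ i
      have h2 : (0 : ℤ) ≤ (U : ℤ) * (ystar m2 i - ystar m1 i) :=
        mul_nonneg (Int.natCast_nonneg U) (by omega)
      simp only [Pi.add_apply, Pi.sub_apply, Pi.smul_apply, nsmul_eq_mul, Pi.mul_apply, Pi.natCast_apply]
      push_cast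
      have h3 : ((U : ℤ) + 1) * (ystar m2 i - ystar m1 i)
          = (U : ℤ) * (ystar m2 i - ystar m1 i) + (ystar m2 i - ystar m1 i) := by ring
      omega
    have hw := walk hM hcyc hm21 hm22 hm11 hm12 hb
    have heq : t + (ystar m1 - ystar 1) + (U + 1) • (ystar m2 - ystar m1)
        + (ystar m1 - ystar m2)
        = t + (ystar m1 - ystar 1) + U • (ystar m2 - ystar m1) := by
      rw [succ_nsmul]; abel
    exact (heq ▸ hw).trans ih

end PumpAux

private lemma span_round {d : ℕ} (Rn : Finset ((Fin d → ℤ) × (Fin d → ℤ)))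
    (u : Fin d → ℤ)
    (hu : (fun i => ((u i : ℤ) : ℝ)) ∈ Submodule.span ℝ
      {v : Fin d → ℝ | ∃ r ∈ Rn, v = fun i => ((r.2 i - r.1 i : ℤ) : ℝ)}) :
    ∃ s ∈ AddSubgroup.closure {w : Fin d → ℤ | ∃ r ∈ Rn, w = r.2 - r.1},
      ∀ i, |u i - s i| ≤ ∑ e ∈ Rn.image (fun r => r.2 - r.1), ∑ j, |e j| := by
  classical
  set E : Finset (Fin d → ℤ) := Rn.image (fun r => r.2 - r.1) with hE
  set cF : (Fin d → ℤ) → (Fin d → ℝ) := fun w i => ((w i : ℤ) : ℝ) with hcF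
  have hset : {v : Fin d → ℝ | ∃ r ∈ Rn, v = fun i => ((r.2 i - r.1 i : ℤ) : ℝ)}
      = ↑(E.image cF) := by
    ext v
    simp only [Set.mem_setOf_eq, Finset.coe_image, Set.mem_image, Finset.mem_coe, hE,
      Finset.mem_image]
    constructor
    · rintro ⟨r, hr, rfl⟩
      exact ⟨r.2 - r.1, ⟨r, hr, rfl⟩, rfl⟩
    · rintro ⟨w, ⟨r, hr, rfl⟩, rfl⟩
      exact ⟨r, hr, rfl⟩
  rw [hset, Submodule.mem_span_finset] at hu
  obtain ⟨g, -, hg⟩ := hu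
  have hinj : ∀ w ∈ E, ∀ w' ∈ E, cF w = cF w' → w = w' := by
    intro w _ w' _ h
    funext i
    have h2 := congrFun h i
    simp only [hcF] at h2
    exact_mod_cast h2
  rw [Finset.sum_image hinj] at hg
  refine ⟨∑ e ∈ E, ⌊g (cF e)⌋ • e, ?_, ?_⟩
  · apply AddSubgroup.sum_mem
    intro e he
    apply AddSubgroup.zsmul_mem
    apply AddSubgroup.subset_closure
    obtain ⟨r, hr, rfl⟩ := Finset.mem_image.mp (hE ▸ he)
    exact ⟨r, hr, rfl⟩
  · intro i
    have hcast : (((∑ e ∈ E, ⌊g (cF e)⌋ • e) i : ℤ) : ℝ)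
        = ∑ e ∈ E, (⌊g (cF e)⌋ : ℝ) * ((e i : ℤ) : ℝ) := by
      rw [Finset.sum_apply]
      push_cast
      apply Finset.sum_congr rfl
      intro e _
      simp [smul_eq_mul]
    have hui : ((u i : ℤ) : ℝ) = ∑ e ∈ E, g (cF e) * ((e i : ℤ) : ℝ) := by
      have h := congrFun hg i
      rw [Finset.sum_apply] at h
      simp only [Pi.smul_apply, smul_eq_mul, hcF] at h
      exact h.symm
    have hb : |((u i : ℤ) : ℝ) - (((∑ e ∈ E, ⌊g (cF e)⌋ • e) i : ℤ) : ℝ)|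
        ≤ ((∑ e ∈ E, ∑ j, |e j| : ℤ) : ℝ) := by
      rw [hcast, hui, ← Finset.sum_sub_distrib]
      refine le_trans (Finset.abs_sum_le_sum_abs _ _) ?_
      push_cast
      apply Finset.sum_le_sum
      intro e _
      calc |g (cF e) * ((e i : ℤ) : ℝ) - (⌊g (cF e)⌋ : ℝ) * ((e i : ℤ) : ℝ)|
          = |g (cF e) - (⌊g (cF e)⌋ : ℝ)| * |((e i : ℤ) : ℝ)| := by rw [← sub_mul, abs_mul]
        _ ≤ 1 * |((e i : ℤ) : ℝ)| := by
            apply mul_le_mul_of_nonneg_right _ (abs_nonneg _)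
            rw [Int.self_sub_floor]
            have h1 := Int.fract_nonneg (g (cF e))
            have h2 := (Int.fract_lt_one (g (cF e))).le
            rw [abs_of_nonneg h1]
            exact h2
        _ = |((e i : ℤ) : ℝ)| := one_mul _
        _ ≤ ∑ j, |((e j : ℤ) : ℝ)| :=
            Finset.single_le_sum (f := fun j => |((e j : ℤ) : ℝ)|)
              (fun j _ => abs_nonneg _) (Finset.mem_univ i)
    exact_mod_cast hb

private lemma exists_infinite_fiber_of_bounded {d : ℕ} {B : ℤ} (f : ℕ → Fin d → ℤ)
    (hf : ∀ n i, |f n i| ≤ B) : ∃ u, {n | f n = u}.Infinite := by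
  classical
  by_contra h
  push_neg at h
  have hIcc : (Set.Icc (fun _ => -B : Fin d → ℤ) (fun _ => B)).Finite := Set.finite_Icc _ _
  have hcov : (Set.univ : Set ℕ) ⊆
      ⋃ u ∈ Set.Icc (fun _ => -B : Fin d → ℤ) (fun _ => B), {n | f n = u} := by
    intro n _
    have h1 : f n ∈ Set.Icc (fun _ => -B : Fin d → ℤ) (fun _ => B) := by
      rw [Set.mem_Icc, Pi.le_def, Pi.le_def]
      constructor <;> intro i <;>
        · have h2 := abs_le.mp (hf n i)
          omega
    exact Set.mem_biUnion h1 rfl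
  exact Set.infinite_univ (Set.Finite.subset (hIcc.biUnion fun u _ => h u) hcov)

private lemma exists_strictMono_in {A : Set ℕ} (hA : A.Infinite) :
    ∃ φ : ℕ → ℕ, StrictMono φ ∧ ∀ k, φ k ∈ A := by
  have next : ∀ a : ℕ, ∃ b, b ∈ A ∧ a < b := by
    intro a
    obtain ⟨b, hb, hab⟩ := hA.exists_gt a
    exact ⟨b, hb, hab⟩
  choose nx hnA hnlt using next
  refine ⟨fun k => Nat.rec (nx 0) (fun _ prev => nx prev) k, ?_, ?_⟩
  · apply strictMono_nat_of_lt_succ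
    intro k
    exact hnlt _
  · intro k
    cases k with
    | zero => exact hnA 0
    | succ k => exact hnA _

/-- Construction of a desired tier sequence: under weak reversibility, the span condition and
the ordering condition, there is a tier sequence of states reachable from `x` along which `R`
is still a strong tier-1 cycle, staying at bounded distance from a subsequence of `{x_n}`. -/
theorem stmt10 {d M : ℕ} (hd : 1 ≤ d) (hM : 1 ≤ M)
    (Rn : Finset ((Fin d → ℤ) × (Fin d → ℤ))) (hRn : IsRN d Rn)
    (hwr : WeaklyReversible d Rn)
    (ystar : ℕ → Fin d → ℤ) (x : ℕ → Fin d → ℤ)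
    (htier : IsTierSeq d Rn x)
    (hcycle : IsStrongT1Cycle d Rn M ystar x)
    (hspan : ∀ n, (fun i => ((x n i - x 0 i : ℤ) : ℝ)) ∈
      Submodule.span ℝ {v : Fin d → ℝ | ∃ r ∈ Rn, v = fun i => ((r.2 i - r.1 i : ℤ) : ℝ)})
    (hlt : ∃ m1 m2, 1 ≤ m1 ∧ m1 ≤ M ∧ 1 ≤ m2 ∧ m2 ≤ M ∧ ∀ i, ystar m1 i < ystar m2 i)
    (xinit : Fin d → ℤ) (hxinit0 : ∀ i, 0 ≤ xinit i)
    (hxinit1 : ∀ i, ystar 1 i ≤ xinit i)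
    (hxinit2 : ∀ i, ¬ Tendsto (fun n => x n i) atTop atTop → ∀ n, xinit i = x n i) :
    ∃ xb : ℕ → Fin d → ℤ,
      IsTierSeq d Rn xb ∧
      (∀ n, Reachable d Rn xinit (xb n)) ∧
      IsStrongT1Cycle d Rn M ystar xb ∧
      (∀ n i, ¬ Tendsto (fun n => x n i) atTop atTop → xb n i = x 0 i) ∧
      ∃ φ : ℕ → ℕ, StrictMono φ ∧ ∃ B : ℤ, ∀ k i, |xb k i - x (φ k) i| ≤ B := by

  classical
  obtain ⟨hcyc, hpos, m0, hm01, hm02, htl⟩ := hcycle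
  obtain ⟨hxnn, hexdiv, hcoord, hratio⟩ := htier
  obtain ⟨m1, m2, hm11, hm12, hm21, hm22, hlt12⟩ := hlt
  -- coordinate dichotomy
  have hdic : ∀ i, Tendsto (fun n => x n i) atTop atTop ∨ (∀ n, x n i = x 0 i) := by
    intro i
    rcases hcoord i with h | ⟨c, hc⟩
    · exact Or.inl h.1
    · exact Or.inr fun n => by rw [hc n, hc 0]
  have hconst_nT : ∀ i, (∀ n, x n i = x 0 i) → ¬ Tendsto (fun n => x n i) atTop atTop :=
    fun i h => const_not_tendsto h
  have hnT_const : ∀ i, ¬ Tendsto (fun n => x n i) atTop atTop → (∀ n, x n i = x 0 i) :=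
    fun i h => (hdic i).resolve_left h
  have hmono : ∀ i, Tendsto (fun n => x n i) atTop atTop → Monotone (fun n => x n i) := by
    intro i h
    rcases hcoord i with h' | ⟨c, hc⟩
    · exact h'.2
    · exact absurd h (const_not_tendsto hc)
  have hxge : ∀ n i, ystar 1 i ≤ x n i := fun n => le_of_intensity_pos' (hpos n)
  have hynn : ∀ m, 1 ≤ m → m ≤ M → ∀ i, 0 ≤ ystar m i :=
    fun m h1 h2 => (hRn _ (hcyc m h1 h2)).1
  -- rounding and pigeonhole
  have hround := fun n => span_round Rn (x n - x 0) (hspan n)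
  choose sfun hsS hserr using hround
  obtain ⟨u, hu⟩ := exists_infinite_fiber_of_bounded (fun n => (x n - x 0) - sfun n)
    (fun n i => hserr n i)
  obtain ⟨φ, hφ, hφA⟩ := exists_strictMono_in hu
  have hφT : Tendsto φ atTop atTop := hφ.tendsto_atTop
  have hdiffS : ∀ k, (x (φ k) - x (φ 0)) ∈
      AddSubgroup.closure {w : Fin d → ℤ | ∃ r ∈ Rn, w = r.2 - r.1} := by
    intro k
    have h1 : (x (φ k) - x 0) - sfun (φ k) = u := hφA k
    have h2 : (x (φ 0) - x 0) - sfun (φ 0) = u := hφA 0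
    have h3 : x (φ k) - x (φ 0) = sfun (φ k) - sfun (φ 0) := by
      have h4 := h1.trans h2.symm
      funext i
      have h5 := congrFun h4 i
      simp only [Pi.sub_apply] at h5 ⊢
      omega
    rw [h3]
    exact AddSubgroup.sub_mem _ (hsS _) (hsS _)
  -- the shifted sequence
  set w : Fin d → ℤ := xinit - x (φ 0) with hwdef
  set xb : ℕ → Fin d → ℤ := fun k i => x (φ k) i + w i with hxb
  have hw0 : ∀ i, (∀ n, x n i = x 0 i) → w i = 0 := by
    intro i hci
    have h1 := hxinit2 i (hconst_nT i hci) (φ 0)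
    simp only [hwdef, Pi.sub_apply]
    omega
  have hgrow : ∀ k i, xinit i ≤ xb k i := by
    intro k i
    rcases hdic i with hT | hc
    · have h1 : x (φ 0) i ≤ x (φ k) i := hmono i hT (hφ.monotone (Nat.zero_le k))
      simp only [hxb, hwdef, Pi.sub_apply]
      omega
    · have hwi := hw0 i hc
      have h1 := hc (φ k)
      have h2 := hxinit2 i (hconst_nT i hc) (φ k)
      simp only [hxb, hwi]
      omega
  have hxbconst : ∀ k i, (∀ n, x n i = x 0 i) → xb k i = xinit i := by
    intro k i hc
    have hwi := hw0 i hc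
    have h1 := hc (φ k)
    have h2 := hxinit2 i (hconst_nT i hc) (φ k)
    simp only [hxb, hwi]
    omega
  have hxbge : ∀ k i, ystar 1 i ≤ xb k i := fun k i => le_trans (hxinit1 i) (hgrow k i)
  -- SH hypotheses
  have hzKm : ∀ (mm : ℕ), ∀ i,
      Tendsto (fun n => xshift d ystar x mm n i) atTop atTop ∨
      ((∀ n, xshift d ystar x mm n i = xshift d ystar x mm 0 i) ∧ w i = 0) := by
    intro mm i
    rcases hdic i with hT | hc
    · exact Or.inl (tendsto_atTop_add_const_right _ _ hT)
    · refine Or.inr ⟨fun n => ?_, hw0 i hc⟩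
      simp only [xshift]
      rw [hc n]
  have hzx : ∀ i, Tendsto (fun n => x n i) atTop atTop ∨
      ((∀ n, x n i = x 0 i) ∧ w i = 0) := by
    intro i
    rcases hdic i with hT | hc
    · exact Or.inl hT
    · exact Or.inr ⟨hc, hw0 i hc⟩
  -- argument swap for shifted intensities
  have hargeq : ∀ mm k, xshift d ystar xb mm k
      = (fun i => xshift d ystar x mm (φ k) i + w i) := by
    intro mm k
    funext i
    simp only [xshift, hxb]
    ring
  -- TierLimits for xb
  have htlb : TierLimits d Rn M ystar xb m0 := by
    intro m hm1' hm2' y y' hyy' hne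
    have hx0 := htl m hm1' hm2' y y' hyy' hne
    obtain ⟨ρ0, hρ0, he0⟩ := intensity_shift (ystar m0) w
      (fun n => xshift d ystar x m0 n) (hzKm m0)
    obtain ⟨ρy, hρy, hey⟩ := intensity_shift y w
      (fun n => xshift d ystar x m n) (hzKm m)
    obtain ⟨ρm, hρm, hem⟩ := intensity_shift (ystar m) w
      (fun n => xshift d ystar x m n) (hzKm m)
    have hcoef : Tendsto (fun n => ρ0 n * ρy n / ρm n) atTop (nhds 1) := by
      have h := (hρ0.mul hρy).div hρm one_ne_zero
      simp at h; exact h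
    have hgoal : Tendsto (fun n =>
        ((intensity d (ystar m0) (fun i => xshift d ystar x m0 n i + w i) : ℝ) *
          (intensity d y (fun i => xshift d ystar x m n i + w i) : ℝ)) /
          (intensity d (ystar m) (fun i => xshift d ystar x m n i + w i) : ℝ))
        atTop (nhds 0) := by
      have hzero : Tendsto (fun n => (ρ0 n * ρy n / ρm n) *
          (((intensity d (ystar m0) (xshift d ystar x m0 n) : ℝ) *
            (intensity d y (xshift d ystar x m n) : ℝ)) /
            (intensity d (ystar m) (xshift d ystar x m n) : ℝ))) atTop (nhds 0) := by
        have h := hcoef.mul hx0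
        simpa using h
      apply hzero.congr'
      filter_upwards [he0, hey, hem, hρm.eventually_ne one_ne_zero] with n h0 h1 h2 hne0
      rw [h0, h1, h2]
      exact (div_transfer _ _ _ _ _ _ hne0).symm
    have hcomp := hgoal.comp hφT
    apply hcomp.congr'
    filter_upwards with k
    simp only [Function.comp_apply]
    rw [hargeq m0 k, hargeq m k]
  -- tier ratio condition for xb
  have hratiob : ∀ y y' : Fin d → ℤ, IsSourceIn d Rn y → IsSourceIn d Rn y' →
      (Tendsto (fun n => (intensity d y (xb n) : ℝ) / (intensity d y' (xb n) : ℝ))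
        atTop atTop ∨
      ∃ c : ℝ, Tendsto (fun n => (intensity d y (xb n) : ℝ) / (intensity d y' (xb n) : ℝ))
        atTop (nhds c)) := by
    intro y y' hy hy'
    obtain ⟨ρy, hρy, hey⟩ := intensity_shift y w x hzx
    obtain ⟨ρy', hρy', hey'⟩ := intensity_shift y' w x hzx
    have hEq : (fun n => (ρy n / ρy' n) *
        ((intensity d y (x n) : ℝ) / (intensity d y' (x n) : ℝ)))
        =ᶠ[atTop] (fun n => (intensity d y (fun i => x n i + w i) : ℝ) /
          (intensity d y' (fun i => x n i + w i) : ℝ)) := by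
      filter_upwards [hey, hey', hρy'.eventually_ne one_ne_zero] with n h1 h2 hne
      rw [h1, h2]
      exact (div_transfer2 _ _ _ _ hne).symm
    have hcoef : Tendsto (fun n => ρy n / ρy' n) atTop (nhds 1) := by
      have := hρy.div hρy' one_ne_zero
      simp at this; exact this
    have hmatch : ∀ (G : ℕ → ℝ), ((fun n => (intensity d y (fun i => x n i + w i) : ℝ) /
          (intensity d y' (fun i => x n i + w i) : ℝ)) ∘ φ)
        =ᶠ[atTop] (fun n => (intensity d y (xb n) : ℝ) / (intensity d y' (xb n) : ℝ)) := by
      intro G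
      filter_upwards with k
      simp only [Function.comp_apply, hxb]
    rcases hratio y y' hy hy' with hT | ⟨c, hc⟩
    · left
      have hfull := (Tendsto.pos_mul_atTop one_pos hcoef hT).congr' hEq
      exact (hfull.comp hφT).congr' (hmatch (fun _ => 0))
    · right
      refine ⟨c, ?_⟩
      have h1 := (hcoef.mul hc).congr' hEq
      rw [one_mul] at h1
      exact (h1.comp hφT).congr' (hmatch (fun _ => 0))
  -- reachability
  have hreach : ∀ k, Reachable d Rn xinit (xb k) := by
    intro k
    have hsS' := hdiffS k
    have hsnn : ∀ i, 0 ≤ (x (φ k) - x (φ 0)) i := by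
      intro i
      rcases hdic i with hT | hc
      · have h1 : x (φ 0) i ≤ x (φ k) i := hmono i hT (hφ.monotone (Nat.zero_le k))
        simp only [Pi.sub_apply]
        omega
      · simp only [Pi.sub_apply, hc (φ k), hc (φ 0)]
        omega
    obtain ⟨T, hT⟩ := reach_move hRn hwr hsS'
    set U : ℕ := T.toNat with hU
    have hδle : ∀ i, ystar m1 i ≤ ystar m2 i := fun i => (hlt12 i).le
    have hsmul : ∀ (V : ℕ) (i : Fin d), (V • (ystar m2 - ystar m1)) i
        = (V : ℤ) * (ystar m2 i - ystar m1 i) := by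
      intro V i
      simp [Pi.smul_apply, nsmul_eq_mul, Pi.mul_apply, Pi.natCast_apply, Pi.sub_apply]
    have h1 : Reachable d Rn xinit (xinit + (ystar m1 - ystar 1)) :=
      walk hM hcyc le_rfl hM hm11 hm12 hxinit1
    have hge1 : ∀ i, ystar m1 i ≤ (xinit + (ystar m1 - ystar 1)) i := by
      intro i
      have := hxinit1 i
      simp only [Pi.add_apply, Pi.sub_apply]
      omega
    have h2 : Reachable d Rn (xinit + (ystar m1 - ystar 1))
        (xinit + (ystar m1 - ystar 1) + U • (ystar m2 - ystar m1)) :=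
      reach_pump hM hcyc hm11 hm12 hm21 hm22 hδle U _ hge1
    have hbig : ∀ i, T ≤ (xinit + (ystar m1 - ystar 1) + U • (ystar m2 - ystar m1)) i := by
      intro i
      have hx1 := hxinit1 i
      have hy1 : 0 ≤ ystar m1 i := hynn m1 hm11 hm12 i
      have hTU : T ≤ (U : ℤ) := Int.self_le_toNat T
      have hδ1 : 1 ≤ ystar m2 i - ystar m1 i := by have := hlt12 i; omega
      have hU0 : 0 ≤ (U : ℤ) := Int.natCast_nonneg U
      have hUδ : (U : ℤ) * 1 ≤ (U : ℤ) * (ystar m2 i - ystar m1 i) :=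
        mul_le_mul_of_nonneg_left hδ1 hU0
      have hh := hsmul U i
      simp only [Pi.add_apply, Pi.sub_apply]
      omega
    have h3 := (hT _ hbig).1
    have ht1 : ∀ i, ystar 1 i ≤ (xinit + (x (φ k) - x (φ 0))) i := by
      intro i
      have := hxinit1 i
      have := hsnn i
      simp only [Pi.add_apply]
      omega
    have h4 : Reachable d Rn
        ((xinit + (x (φ k) - x (φ 0))) + (ystar m1 - ystar 1) + U • (ystar m2 - ystar m1))
        ((xinit + (x (φ k) - x (φ 0))) + (ystar m1 - ystar 1)) :=
      reach_down hM hcyc hm11 hm12 hm21 hm22 hδle U ht1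
    have heq34 : xinit + (ystar m1 - ystar 1) + U • (ystar m2 - ystar m1)
          + (x (φ k) - x (φ 0))
        = (xinit + (x (φ k) - x (φ 0))) + (ystar m1 - ystar 1)
          + U • (ystar m2 - ystar m1) := by abel
    have hge5 : ∀ i, ystar m1 i ≤ ((xinit + (x (φ k) - x (φ 0))) + (ystar m1 - ystar 1)) i := by
      intro i
      have := ht1 i
      simp only [Pi.add_apply, Pi.sub_apply] at this ⊢
      omega
    have h5 : Reachable d Rn ((xinit + (x (φ k) - x (φ 0))) + (ystar m1 - ystar 1))
        ((xinit + (x (φ k) - x (φ 0))) + (ystar m1 - ystar 1) + (ystar 1 - ystar m1)) :=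
      walk hM hcyc hm11 hm12 le_rfl hM hge5
    have heq5 : (xinit + (x (φ k) - x (φ 0))) + (ystar m1 - ystar 1) + (ystar 1 - ystar m1)
        = xinit + (x (φ k) - x (φ 0)) := by abel
    have hfin : xinit + (x (φ k) - x (φ 0)) = xb k := by
      funext i
      simp only [Pi.add_apply, Pi.sub_apply, hxb, hwdef]
      ring
    have hall := ((h1.trans h2).trans (heq34 ▸ h3)).trans (h4.trans (heq5 ▸ h5))
    rwa [hfin] at hall
  -- assemble
  refine ⟨xb, ⟨?_, ?_, ?_, hratiob⟩, hreach, ⟨hcyc, ?_, m0, hm01, hm02, htlb⟩, ?_, φ, hφ,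
    ∑ i, |w i|, ?_⟩
  · -- nonneg
    intro n i
    exact le_trans (hxinit0 i) (hgrow n i)
  · -- exists diverging coordinate
    obtain ⟨i, hi⟩ := hexdiv
    refine ⟨i, ?_⟩
    have h1 : Tendsto (fun k => x (φ k) i) atTop atTop := hi.comp hφT
    have h2 := tendsto_atTop_add_const_right atTop (w i) h1
    exact h2.congr fun k => rfl
  · -- coordinate dichotomy for xb
    intro i
    rcases hdic i with hT | hc
    · left
      constructor
      · have h1 : Tendsto (fun k => x (φ k) i) atTop atTop := hT.comp hφT
        exact tendsto_atTop_add_const_right atTop (w i) h1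
      · intro a b hab
        have h1 : x (φ a) i ≤ x (φ b) i := hmono i hT (hφ.monotone hab)
        simp only [hxb]
        omega
    · right
      refine ⟨xinit i, fun k => hxbconst k i hc⟩
  · -- positivity of intensity along xb
    intro n
    exact intensity_pos' (fun i => hxbge n i)
  · -- constancy on non-diverging coordinates
    intro n i hnT
    have hc := hnT_const i hnT
    have h1 := hxbconst n i hc
    have h2 := hxinit2 i hnT 0
    omega
  · -- bounded distance
    intro k i
    have h1 : xb k i - x (φ k) i = w i := by
      simp only [hxb]
      ring
    rw [h1]
    exact Finset.single_le_sum (f := fun j => |w j|) (fun j _ => abs_nonneg _)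
      (Finset.mem_univ i)
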